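/- Let x, y be in the closed unit ball of ℝ^d and ε ∈ (0, 1/2]. With the shrink-lift transformation x↑ := (εx; √(1 - ε²‖x‖²)), the angle between x↑ and y↑ satisfies ε‖x-y‖ ≤ ∠(x↑, y↑) ≤ m(ε)·ε‖x-y‖, where m(ε) = √(1+2ε²)/√(1-2ε²). -/

import Mathlib

noncomputable def shrinkLift (d : ℕ) (ε : ℝ) (x : EuclideanSpace ℝ (Fin d)) :
    EuclideanSpace ℝ (Fin (d + 1)) :=
  WithLp.toLp 2 fun i => if h : (i : ℕ) < d then ε * x ⟨i, h⟩ else Real.sqrt (1 - ε ^ 2 * ‖x‖ ^ 2)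

lemma inner_shrinkLift (d : ℕ) (ε : ℝ) (x y : EuclideanSpace ℝ (Fin d)) :
    (inner ℝ (shrinkLift d ε x) (shrinkLift d ε y) : ℝ) =
      ε ^ 2 * (inner ℝ x y : ℝ) +
        Real.sqrt (1 - ε ^ 2 * ‖x‖ ^ 2) * Real.sqrt (1 - ε ^ 2 * ‖y‖ ^ 2) := by
  simp only [PiLp.inner_apply, RCLike.inner_apply, starRingEnd_apply, star_trivial, shrinkLift,
    PiLp.toLp_apply]
  rw [Fin.sum_univ_castSucc]
  simp only [Fin.coe_castSucc, Fin.is_lt, dif_pos, Fin.eta, Fin.val_last, lt_self_iff_false,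
    dif_neg, not_false_eq_true]
  rw [Finset.mul_sum]
  congr 1
  · exact Finset.sum_congr rfl fun i _ => by ring
  · ring

lemma norm_shrinkLift (d : ℕ) (ε : ℝ) (x : EuclideanSpace ℝ (Fin d))
    (h : ε ^ 2 * ‖x‖ ^ 2 ≤ 1) : ‖shrinkLift d ε x‖ = 1 := by
  have h1 : ‖shrinkLift d ε x‖ ^ 2 = 1 := by
    rw [← real_inner_self_eq_norm_sq, inner_shrinkLift, real_inner_self_eq_norm_sq,
      Real.mul_self_sqrt (by linarith)]
    ring
  nlinarith [norm_nonneg (shrinkLift d ε x)]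

lemma arccos_antitone : Antitone Real.arccos := by
  intro a b hab
  simp only [Real.arccos]
  have := Real.monotone_arcsin hab
  linarith

lemma key_ineq (e S D t : ℝ) (he0 : 0 < e) (he : e ≤ 1/4) (hS0 : 0 ≤ S) (hS : S ≤ 4)
    (hD0 : 0 ≤ D) (hD : D * (1 - e) ≤ 2 * e^2 * S)
    (ht : t * (1 - 2*e) = (1 + 2*e) * e * S) (ht0 : 0 ≤ t) :
    e * S + D ≤ t * (1 - t/16)^2 := by
  have h2e : (0:ℝ) < 1 - 2*e := by linarith
  have h1e : (0:ℝ) < 1 - e := by linarith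
  have hstep : e * S + D ≤ t * (1 - t/8) := by
    have hpos : (0:ℝ) < (1-2*e)^2 * (1-e) := by positivity
    rw [← sub_nonneg]
    have expand : ((1-2*e)^2 * (1-e)) * (t * (1 - t/8) - (e*S + D))
        = ((1+2*e)*e*S)*(1-2*e)*(1-e) - ((1+2*e)*e*S)^2*(1-e)/8
          - e*S*(1-2*e)^2*(1-e) - D*(1-e)*(1-2*e)^2 := by
      rw [← ht]; ring
    have hSS : S^2 ≤ 4*S := by nlinarith
    have f1 : ((1+2*e)*e*S)^2*(1-e)/8 ≤ (1+2*e)^2*e^2*S*(1-e)/2 := by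
      have h := mul_le_mul_of_nonneg_left hSS (by positivity : (0:ℝ) ≤ (1+2*e)^2*e^2)
      nlinarith [h]
    have f2 : D*(1-e)*(1-2*e)^2 ≤ 2*e^2*S*(1-2*e)^2 := by
      calc D*(1-e)*(1-2*e)^2 ≤ (2*e^2*S)*(1-2*e)^2 :=
            mul_le_mul_of_nonneg_right hD (by positivity)
        _ = 2*e^2*S*(1-2*e)^2 := by ring
    have f3 : 0 ≤ e*S*(e*(3/2 - 11/2*e + 2*e^3)) := by
      have hg : 0 ≤ e*(3/2 - 11/2*e + 2*e^3) := by nlinarith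
      exact mul_nonneg (mul_nonneg he0.le hS0) hg
    have key : 0 ≤ ((1-2*e)^2 * (1-e)) * (t * (1 - t/8) - (e*S + D)) := by
      rw [expand]
      have bracket : e*S*((1+2*e)*(1-2*e)*(1-e) - (1+2*e)^2*e*(1-e)/2
          - (1-2*e)^2*(1-e) - 2*e*(1-2*e)^2) = e*S*(e*(3/2 - 11/2*e + 2*e^3)) := by ring
      linarith [f1, f2, f3, bracket]
    exact nonneg_of_mul_nonneg_right key hpos
  nlinarith [mul_nonneg ht0 (sq_nonneg t)]


lemma aux_t_le_3 (e S t : ℝ) (he0 : 0 < e) (he : e ≤ 1/4) (hS0 : 0 ≤ S) (hS : S ≤ 4)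
    (ht : t * (1 - 2*e) = (1 + 2*e) * e * S) (ht0 : 0 ≤ t) : t ≤ 3 := by
  nlinarith [mul_le_mul_of_nonneg_left hS (mul_nonneg (by linarith : (0:ℝ) ≤ 1+2*e) he0.le),
    mul_nonneg he0.le (by linarith : (0:ℝ) ≤ 1/4 - e),
    mul_nonneg ht0 (by linarith : (0:ℝ) ≤ 1/4 - e)]

lemma aux_sq_le (a : ℝ) (h : a^2 ≤ 3) (h0 : 0 ≤ a) : a ≤ 2 := by nlinarith

lemma aux_cube (a : ℝ) (h0 : 0 ≤ a) (h2 : a ≤ 2) : 0 ≤ a/2 - (a/2)^3/4 := by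
  nlinarith [mul_nonneg h0 (by linarith : (0:ℝ) ≤ 2-a),
    mul_nonneg (mul_nonneg h0 h0) (by linarith : (0:ℝ) ≤ 2-a)]

lemma aux_n4 (a b s e : ℝ) (ha : 0 ≤ a) (hb : 0 ≤ b) (ha1 : a ≤ 1) (hb1 : b ≤ 1)
    (h1 : -s ≤ a - b) (h2 : a - b ≤ s) (he : 0 ≤ e) :
    (e*a^2 - e*b^2)^2 ≤ e^2 * (4*s^2) := by
  have h3 : (a-b)^2 ≤ s^2 := by
    nlinarith [mul_nonneg (by linarith : (0:ℝ) ≤ s-(a-b)) (by linarith : (0:ℝ) ≤ s+(a-b))]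
  have h4 : (a+b)^2 ≤ 4 := by nlinarith [mul_nonneg ha hb]
  have hprod : (a-b)^2*(a+b)^2 ≤ s^2*4 :=
    mul_le_mul h3 h4 (sq_nonneg _) (by nlinarith [sq_nonneg (a-b), h3])
  calc (e*a^2-e*b^2)^2 = e^2*((a-b)^2*(a+b)^2) := by ring
    _ ≤ e^2*(s^2*4) := mul_le_mul_of_nonneg_left hprod (sq_nonneg e)
    _ = e^2*(4*s^2) := by ring

theorem stmt_3 (d : ℕ) (x y : EuclideanSpace ℝ (Fin d)) (hx : ‖x‖ ≤ 1) (hy : ‖y‖ ≤ 1)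
    (ε : ℝ) (hε0 : 0 < ε) (hε : ε ≤ 1 / 2) :
    ε * ‖x - y‖ ≤ InnerProductGeometry.angle (shrinkLift d ε x) (shrinkLift d ε y) ∧
    InnerProductGeometry.angle (shrinkLift d ε x) (shrinkLift d ε y) ≤
      Real.sqrt (1 + 2 * ε ^ 2) / Real.sqrt (1 - 2 * ε ^ 2) * (ε * ‖x - y‖) := by
  have hx0 := norm_nonneg x
  have hy0 := norm_nonneg y
  have hx2 : ‖x‖^2 ≤ 1 := by nlinarith
  have hy2 : ‖y‖^2 ≤ 1 := by nlinarith
  have he4 : ε^2 ≤ 1/4 := by nlinarith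
  have he0 : 0 < ε^2 := by positivity
  have hex : ε^2 * ‖x‖^2 ≤ 1 := by nlinarith
  have hey : ε^2 * ‖y‖^2 ≤ 1 := by nlinarith
  set s : ℝ := ‖x - y‖ with hs
  have hs0 : 0 ≤ s := norm_nonneg _
  have hs2 : s ≤ 2 := by
    calc s ≤ ‖x‖ + ‖y‖ := norm_sub_le x y
      _ ≤ 2 := by linarith
  set A : ℝ := Real.sqrt (1 - ε^2 * ‖x‖^2) with hA
  set B : ℝ := Real.sqrt (1 - ε^2 * ‖y‖^2) with hB
  have hA0 : 0 ≤ A := Real.sqrt_nonneg _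
  have hB0 : 0 ≤ B := Real.sqrt_nonneg _
  have hA2 : A^2 = 1 - ε^2 * ‖x‖^2 := Real.sq_sqrt (by nlinarith)
  have hB2 : B^2 = 1 - ε^2 * ‖y‖^2 := Real.sq_sqrt (by nlinarith)
  set I : ℝ := ε^2 * (inner ℝ x y : ℝ) + A * B with hI
  have hangle : InnerProductGeometry.angle (shrinkLift d ε x) (shrinkLift d ε y)
      = Real.arccos I := by
    unfold InnerProductGeometry.angle
    rw [norm_shrinkLift d ε x hex, norm_shrinkLift d ε y hey, inner_shrinkLift]
    norm_num [hI, hA, hB]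
  have hinner : ε^2 * s^2 = ε^2*‖x‖^2 + ε^2*‖y‖^2 - 2*ε^2*(inner ℝ x y : ℝ) := by
    have h := @norm_sub_sq_real (EuclideanSpace ℝ (Fin d)) _ _ x y
    rw [hs]
    linear_combination ε^2 * h
  have h1I : 1 - I = ε^2*s^2/2 + (A-B)^2/2 := by
    have hab : (A-B)^2 = A^2 - 2*(A*B) + B^2 := by ring
    rw [hI]
    linarith [hA2, hB2, hinner, hab]
  have hεs1 : ε * s ≤ 1 := by
    have h := mul_le_mul hε hs2 hs0 (by norm_num : (0:ℝ) ≤ 1/2)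
    linarith
  have hpi := Real.pi_gt_three
  constructor
  · -- lower bound
    rw [hangle]
    have hcos : I ≤ Real.cos (ε*s) := by
      have h := Real.one_sub_sq_div_two_le_cos (x := ε*s)
      have hsq : (ε*s)^2 = ε^2*s^2 := by ring
      linarith [sq_nonneg (A-B), h1I, hsq]
    have h2 := arccos_antitone hcos
    rwa [Real.arccos_cos (mul_nonneg hε0.le hs0) (by linarith)] at h2
  · -- upper bound
    rw [hangle]
    rcases eq_or_lt_of_le hs0 with hseq | hspos
    · -- s = 0 : x = y
      have hxy : x = y := by
        have h0 : ‖x - y‖ = 0 := hseq.symm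
        rwa [norm_sub_eq_zero_iff] at h0
      have hABeq : A = B := by rw [hA, hB, hxy]
      have hI1 : I = 1 := by
        have hAB0 : (A - B)^2 = 0 := by rw [hABeq]; ring
        have hss : ε^2 * s^2 = 0 := by rw [← hseq]; ring
        linarith [h1I, hAB0, hss]
      rw [hI1, Real.arccos_one, ← hseq]
      simp
    · set T : ℝ := Real.sqrt (1 + 2*ε^2) / Real.sqrt (1 - 2*ε^2) * (ε * s) with hT
      have h2e : (0:ℝ) < 1 - 2*ε^2 := by linarith
      have hsq2e : (0:ℝ) < Real.sqrt (1 - 2*ε^2) := Real.sqrt_pos.mpr h2e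
      have hT0 : 0 < T := by
        rw [hT]
        have : (0:ℝ) < Real.sqrt (1 + 2*ε^2) := Real.sqrt_pos.mpr (by linarith)
        positivity
      have hTsq : T^2 * (1 - 2*ε^2) = (1 + 2*ε^2) * ε^2 * s^2 := by
        rw [hT, mul_pow, div_pow, Real.sq_sqrt (by linarith : (0:ℝ) ≤ 1 + 2*ε^2),
          Real.sq_sqrt h2e.le]
        field_simp
      have hs4 : s^2 ≤ 4 := by
        have := pow_le_pow_left₀ hs0 hs2 2
        norm_num at this
        linarith
      have hT3 : T^2 ≤ 3 := by
        have h3 := aux_t_le_3 (ε^2) (s^2) (T^2) he0 he4 (by positivity) hs4 hTsq (sq_nonneg T)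
        linarith
      have hT2 : T ≤ 2 := aux_sq_le T hT3 hT0.le
      -- bound on (A-B)^2
      have hAB2 : (A-B)^2 * (A+B)^2 = (ε^2*‖x‖^2 - ε^2*‖y‖^2)^2 := by
        rw [← mul_pow]
        have h1 : (A-B)*(A+B) = A^2 - B^2 := by ring
        rw [h1, hA2, hB2]
        ring
      have hApB : 2 - 2*ε^2 ≤ (A+B)^2 := by
        have hexp : (A+B)^2 = A^2 + B^2 + 2*(A*B) := by ring
        have hx' : ε^2*‖x‖^2 ≤ ε^2 := by
          calc ε^2*‖x‖^2 ≤ ε^2*1 := mul_le_mul_of_nonneg_left hx2 he0.le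
            _ = ε^2 := by ring
        have hy' : ε^2*‖y‖^2 ≤ ε^2 := by
          calc ε^2*‖y‖^2 ≤ ε^2*1 := mul_le_mul_of_nonneg_left hy2 he0.le
            _ = ε^2 := by ring
        linarith [mul_nonneg hA0 hB0, hA2, hB2, hexp]
      have hn4 : (ε^2*‖x‖^2 - ε^2*‖y‖^2)^2 ≤ (ε^2)^2 * (4*s^2) := by
        have habs := abs_norm_sub_norm_le x y
        rw [← hs] at habs
        obtain ⟨h1, h2⟩ := abs_le.mp habs
        exact aux_n4 ‖x‖ ‖y‖ s (ε^2) hx0 hy0 hx hy h1 h2 he0.le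
      have hD : (A-B)^2 * (1 - ε^2) ≤ 2*(ε^2)^2*s^2 := by
        have step : (A-B)^2 * (2 - 2*ε^2) ≤ (A-B)^2 * (A+B)^2 :=
          mul_le_mul_of_nonneg_left hApB (sq_nonneg (A-B))
        linarith [step, hAB2, hn4]
      have hkey : ε^2 * s^2 + (A-B)^2 ≤ T^2 * (1 - T^2/16)^2 :=
        key_ineq (ε^2) (s^2) ((A-B)^2) (T^2) he0 he4 (by positivity) hs4
          (sq_nonneg _) hD hTsq (sq_nonneg _)
      -- cos T ≤ I
      have hsin : T/2 - (T/2)^3/4 < Real.sin (T/2) := by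
        have := Real.sin_gt_sub_cube (by positivity : (0:ℝ) < T/2)
        have h3 : 0 < (T/2)^3 := by positivity
        linarith
      have hsin0 : 0 ≤ T/2 - (T/2)^3/4 := aux_cube T hT0.le hT2
      have hsinsq : (T^2/4) * (1 - T^2/16)^2 ≤ Real.sin (T/2)^2 := by
        have hid : (T/2 - (T/2)^3/4)^2 = (T^2/4) * (1 - T^2/16)^2 := by ring
        have hp := pow_le_pow_left₀ hsin0 hsin.le 2
        rw [hid] at hp
        exact hp
      have hcosT : Real.cos T = 1 - 2 * Real.sin (T/2)^2 := by
        have h1 := Real.cos_two_mul (T/2)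
        have h2 := Real.sin_sq_add_cos_sq (T/2)
        rw [show 2*(T/2) = T by ring] at h1
        linarith
      have hcos : Real.cos T ≤ I := by
        rw [hcosT]
        linarith [hsinsq, hkey, h1I]
      have h2 := arccos_antitone hcos
      rwa [Real.arccos_cos hT0.le (by linarith)] at h2
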